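/- arXiv:2504.18161 — 4 statements merged into one kernel-verified Lean document; each statement's English description precedes it below -/
import Mathlib

section
/- For any vertices v, u ∈ V, det(Ã^{v,u}(G)) = Σ_{P ∈ 𝒫_{u,v}} μ(P) · det(Ã(G[V \ V(P)])), where the sum is over all simple u→v paths P in G. -/
open MvPolynomial

/-- The symbolic adjacency matrix of a digraph on `Fin n`. -/
noncomputable def symbAdj (n : ℕ) (F : Type) [Field F]
    (E : Fin n → Fin n → Prop) [DecidableRel E] :
    Matrix (Fin n) (Fin n) (MvPolynomial (Fin n × Fin n) F) :=
  Matrix.of fun u v => if E u v then X (u, v) else 0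

/-- `Ã^{v,u}(G)`: the matrix obtained from `Ã(G)` by zeroing all entries in row `v`
and column `u` and setting the entry `(v,u)` to `1`. -/
noncomputable def modMat (n : ℕ) (F : Type) [Field F]
    (E : Fin n → Fin n → Prop) [DecidableRel E] (v u : Fin n) :
    Matrix (Fin n) (Fin n) (MvPolynomial (Fin n × Fin n) F) :=
  Matrix.of fun a b =>
    if a = v then (if b = u then 1 else 0)
    else if b = u then 0 else symbAdj n F E a b

/-- A simple `u → v` path in `G`: an injective sequence of `ℓ+1` vertices starting at
`u`, ending at `v`, with consecutive pairs being edges of `G`. -/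
abbrev SPath (n : ℕ) (E : Fin n → Fin n → Prop) [DecidableRel E] (u v : Fin n) :=
  Σ ℓ : Fin n, {f : Fin ((ℓ : ℕ) + 1) → Fin n //
    Function.Injective f ∧ f 0 = u ∧ f (Fin.last (ℓ : ℕ)) = v ∧
      ∀ i : Fin (ℓ : ℕ), E (f i.castSucc) (f i.succ)}

namespace DetPathAux

open Equiv Equiv.Perm

variable {n : ℕ}

/-- The cyclic permutation sending `f j ↦ f (j-1)` (and `f 0 ↦ f k`). -/
noncomputable def pcyc {k : ℕ} (f : Fin (k + 1) → Fin n) : Equiv.Perm (Fin n) :=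
  ((List.ofFn f).reverse).formPerm

lemma plist_nodup {k : ℕ} {f : Fin (k + 1) → Fin n} (hf : Function.Injective f) :
    ((List.ofFn f).reverse).Nodup := by
  rw [List.nodup_reverse]; exact List.nodup_ofFn.mpr hf

lemma plist_getElem {k : ℕ} (f : Fin (k + 1) → Fin n) (i : ℕ) (hi : i < k + 1) :
    ((List.ofFn f).reverse)[i]'(by simp [hi]) = f ⟨k - i, by omega⟩ := by
  rw [List.getElem_reverse, List.getElem_ofFn]
  congr 1
  apply Fin.ext
  show (List.ofFn f).length - 1 - i = k - i
  simp only [List.length_ofFn]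
  omega

lemma pcyc_apply {k : ℕ} {f : Fin (k + 1) → Fin n} (hf : Function.Injective f)
    (i : ℕ) (hi : i < k + 1) :
    pcyc f (f ⟨k - i, by omega⟩) = f ⟨k - ((i + 1) % (k + 1)), by omega⟩ := by
  have h1 := List.formPerm_apply_getElem ((List.ofFn f).reverse) (plist_nodup hf) i
    (by simp [hi])
  simp only [List.length_reverse, List.length_ofFn] at h1
  rw [plist_getElem f i hi,
    plist_getElem f ((i + 1) % (k + 1)) (Nat.mod_lt _ (by omega))] at h1
  exact h1

lemma pcyc_apply_succ {k : ℕ} {f : Fin (k + 1) → Fin n} (hf : Function.Injective f)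
    (i : Fin k) : pcyc f (f i.succ) = f i.castSucc := by
  have hi : (k - (i + 1) : ℕ) < k + 1 := by omega
  have h := pcyc_apply hf (k - (i + 1)) hi
  have e1 : (⟨k - (k - (i + 1)), by omega⟩ : Fin (k + 1)) = i.succ := by
    apply Fin.ext; simp [Fin.val_succ]; omega
  rw [e1] at h
  rw [h]
  congr 1
  apply Fin.ext
  simp only [Fin.coe_castSucc]
  rw [show (k - ((i : ℕ) + 1) + 1) = k - (i : ℕ) from by omega,
    Nat.mod_eq_of_lt (by omega)]
  omega

lemma pcyc_apply_zero {k : ℕ} {f : Fin (k + 1) → Fin n} (hf : Function.Injective f) :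
    pcyc f (f 0) = f (Fin.last k) := by
  have h := pcyc_apply hf k (by omega)
  simp only [Nat.sub_self, Nat.mod_self, Nat.sub_zero] at h
  have e1 : (⟨0, by omega⟩ : Fin (k + 1)) = 0 := rfl
  have e2 : (⟨k, by omega⟩ : Fin (k + 1)) = Fin.last k := rfl
  rw [e1, e2] at h
  exact h

lemma pcyc_apply_notmem {k : ℕ} {f : Fin (k + 1) → Fin n} {w : Fin n}
    (hw : ∀ j, f j ≠ w) : pcyc f w = w := by
  apply List.formPerm_apply_of_notMem
  simp only [List.mem_reverse, List.mem_ofFn, Set.mem_range]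
  rintro ⟨j, rfl⟩
  exact hw j rfl

lemma sign_pcyc {k : ℕ} {f : Fin (k + 1) → Fin n} (hf : Function.Injective f) :
    Equiv.Perm.sign (pcyc f) = (-1 : ℤˣ) ^ k := by
  cases k with
  | zero =>
    have : (List.ofFn f).reverse = [f 0] := by
      simp [List.ofFn_succ]
    rw [pcyc, this, List.formPerm_singleton]
    simp
  | succ m =>
    have hc : (pcyc f).IsCycle :=
      List.isCycle_formPerm (plist_nodup hf) (by simp)
    rw [hc.sign]
    have hs : (pcyc f).support = ((List.ofFn f).reverse).toFinset := by
      apply List.support_formPerm_of_nodup _ (plist_nodup hf)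
      intro x hx
      have := congrArg List.length hx
      simp at this
    rw [hs, List.toFinset_card_of_nodup (plist_nodup hf)]
    simp only [List.length_reverse, List.length_ofFn]
    rw [pow_succ]
    simp

section Phi

variable {k : ℕ} {f : Fin (k + 1) → Fin n}

/-- Extend a permutation of the off-path vertices by the path cycle. -/
noncomputable def Phi (f : Fin (k + 1) → Fin n)
    (τ : Perm {w : Fin n // ∀ j, f j ≠ w}) : Perm (Fin n) :=
  pcyc f * Equiv.Perm.ofSubtype τ

lemma Phi_apply_mem (τ : Perm {w : Fin n // ∀ j, f j ≠ w}) (j : Fin (k + 1)) :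
    Phi f τ (f j) = pcyc f (f j) := by
  have : Equiv.Perm.ofSubtype τ (f j) = f j :=
    Equiv.Perm.ofSubtype_apply_of_not_mem τ (by push_neg; exact ⟨j, rfl⟩)
  rw [Phi, Equiv.Perm.mul_apply, this]

lemma Phi_apply_notmem (τ : Perm {w : Fin n // ∀ j, f j ≠ w}) {w : Fin n}
    (hw : ∀ j, f j ≠ w) :
    Phi f τ w = ((τ ⟨w, hw⟩ : {w : Fin n // ∀ j, f j ≠ w}) : Fin n) := by
  rw [Phi, Equiv.Perm.mul_apply, Equiv.Perm.ofSubtype_apply_of_mem τ hw]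
  exact pcyc_apply_notmem (τ ⟨w, hw⟩).2

lemma Phi_apply_succ (hf : Function.Injective f)
    (τ : Perm {w : Fin n // ∀ j, f j ≠ w}) (i : Fin k) :
    Phi f τ (f i.succ) = f i.castSucc := by
  rw [Phi_apply_mem, pcyc_apply_succ hf]

lemma Phi_apply_zero (hf : Function.Injective f)
    (τ : Perm {w : Fin n // ∀ j, f j ≠ w}) :
    Phi f τ (f 0) = f (Fin.last k) := by
  rw [Phi_apply_mem, pcyc_apply_zero hf]

lemma Phi_pow (hf : Function.Injective f) (τ : Perm {w : Fin n // ∀ j, f j ≠ w})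
    (t : ℕ) (ht : t ≤ k) :
    ((Phi f τ) ^ t) (f (Fin.last k)) = f ⟨k - t, by omega⟩ := by
  induction t with
  | zero => simp [Fin.last]
  | succ m ih =>
    rw [pow_succ' (Phi f τ) m, Equiv.Perm.mul_apply, ih (by omega)]
    have e : (⟨k - m, by omega⟩ : Fin (k + 1)) = (⟨k - (m + 1), by omega⟩ : Fin k).succ := by
      apply Fin.ext; simp [Fin.val_succ]; omega
    rw [e, Phi_apply_succ hf]
    rfl

lemma Phi_minimalPeriod (hf : Function.Injective f) {u v : Fin n}
    (h0 : f 0 = u) (hl : f (Fin.last k) = v)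
    (τ : Perm {w : Fin n // ∀ j, f j ≠ w}) :
    Function.minimalPeriod (Phi f τ) u = k + 1 := by
  have hper : Function.IsPeriodicPt (Phi f τ) (k + 1) u := by
    show ((Phi f τ))^[k+1] u = u
    rw [Equiv.Perm.iterate_eq_pow, ← h0]
    rw [pow_succ (Phi f τ) k, Equiv.Perm.mul_apply, Phi_apply_zero hf]
    have := Phi_pow hf τ k (le_refl k)
    rw [this]
    congr 1
    apply Fin.ext
    simp
  have hle : Function.minimalPeriod (Phi f τ) u ≤ k + 1 :=
    hper.minimalPeriod_le (by omega)
  have hpos : 0 < Function.minimalPeriod (Phi f τ) u :=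
    hper.minimalPeriod_pos (by omega)
  by_contra hne
  set m := Function.minimalPeriod (Phi f τ) u with hm
  have hmk : m ≤ k := by omega
  have hiter : ((Phi f τ))^[m] u = u := Function.iterate_minimalPeriod
  rw [Equiv.Perm.iterate_eq_pow] at hiter
  have h2 : ((Phi f τ) ^ k) v = u := by
    rw [← hl, Phi_pow hf τ k (le_refl k), ← h0]; congr 1; apply Fin.ext; simp
  have hsu : (Phi f τ) u = v := by rw [← h0, Phi_apply_zero hf, hl]
  have hv : ((Phi f τ) ^ (k + 1)) v = v := by
    rw [pow_succ' (Phi f τ) k, Equiv.Perm.mul_apply, h2, hsu]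
  have key : u = f ⟨k - (m - 1), by omega⟩ := by
    have e1 : u = ((Phi f τ) ^ (m + k)) v := by
      conv_lhs => rw [← hiter, ← h2, ← Equiv.Perm.mul_apply, ← pow_add]
    have e2 : m + k = (m - 1) + (k + 1) := by omega
    rw [e2, pow_add, Equiv.Perm.mul_apply, hv, ← hl,
      Phi_pow hf τ (m - 1) (by omega)] at e1
    exact e1
  replace key := h0.trans key
  have := hf key
  have : (0 : ℕ) = k - (m - 1) := congrArg Fin.val this
  omega

end Phi
end DetPathAux

section Main

open Equiv Equiv.Perm DetPathAux

variable {n : ℕ} {F : Type} [Field F] {E : Fin n → Fin n → Prop} [DecidableRel E]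
  {v u : Fin n}

lemma Phi_inj (a₁ a₂ : Σ P : SPath n E u v, Perm {w : Fin n // ∀ i, P.2.1 i ≠ w})
    (h : Phi a₁.1.2.1 a₁.2 = Phi a₂.1.2.1 a₂.2) : a₁ = a₂ := by
  obtain ⟨⟨ℓ₁, g₁⟩, τ₁⟩ := a₁
  obtain ⟨⟨ℓ₂, g₂⟩, τ₂⟩ := a₂
  obtain ⟨hinj₁, h0₁, hl₁, hE₁⟩ := g₁.2
  obtain ⟨hinj₂, h0₂, hl₂, hE₂⟩ := g₂.2
  have hℓ : ℓ₁ = ℓ₂ := by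
    apply Fin.ext
    have h1 := Phi_minimalPeriod hinj₁ h0₁ hl₁ τ₁
    have h2 := Phi_minimalPeriod hinj₂ h0₂ hl₂ τ₂
    simp only at h
    rw [h] at h1
    rw [h2] at h1
    omega
  subst hℓ
  have hg : g₁ = g₂ := by
    apply Subtype.ext
    funext j
    have e₁ := Phi_pow hinj₁ τ₁ ((ℓ₁ : ℕ) - (j : ℕ)) (by omega)
    have e₂ := Phi_pow hinj₂ τ₂ ((ℓ₁ : ℕ) - (j : ℕ)) (by omega)
    rw [hl₁] at e₁
    rw [hl₂] at e₂
    have ej : (⟨(ℓ₁ : ℕ) - ((ℓ₁ : ℕ) - (j : ℕ)), by omega⟩ : Fin ((ℓ₁ : ℕ) + 1)) = j := by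
      apply Fin.ext; simp; omega
    rw [ej] at e₁ e₂
    rw [← e₁, ← e₂, h]
  subst hg
  have hτ : τ₁ = τ₂ := by
    apply Equiv.ext
    intro b
    apply Subtype.ext
    have e₁ := Phi_apply_notmem τ₁ b.2
    have e₂ := Phi_apply_notmem τ₂ b.2
    simp only [Subtype.coe_eta] at e₁ e₂
    simp only at h
    rw [← e₁, ← e₂, h]
  subst hτ
  rfl

lemma Phi_surj (σ : Perm (Fin n)) (hσ : ∀ i, modMat n F E v u (σ i) i ≠ 0) :
    ∃ a : Σ P : SPath n E u v, Perm {w : Fin n // ∀ i, P.2.1 i ≠ w},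
      Phi a.1.2.1 a.2 = σ := by
  have hσu : σ u = v := by
    by_contra hne
    exact hσ u (by simp [modMat, hne])
  set m := Function.minimalPeriod σ u with hmdef
  have hper : Function.IsPeriodicPt σ (orderOf σ) u := by
    show σ^[orderOf σ] u = u
    rw [Equiv.Perm.iterate_eq_pow, pow_orderOf_eq_one]
    rfl
  have hmpos : 0 < m := hper.minimalPeriod_pos (orderOf_pos σ)
  have hmfix : (σ ^ m) u = u := by
    have := Function.iterate_minimalPeriod (f := ⇑σ) (x := u)
    rwa [Equiv.Perm.iterate_eq_pow] at this
  set k := m - 1 with hkdef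
  set f : Fin (k + 1) → Fin n := fun j => (σ ^ (m - (j : ℕ))) u with hfdef
  have hfinj : Function.Injective f := by
    have aux : ∀ i j : Fin (k + 1), (i : ℕ) ≤ (j : ℕ) → f i = f j → i = j := by
      intro i j hle hij
      by_contra hne
      have hlt : (i : ℕ) < (j : ℕ) := by
        rcases Nat.lt_or_ge (i : ℕ) (j : ℕ) with h | h
        · exact h
        · exact absurd (Fin.ext (by omega)) hne
      have hsplit : σ ^ (m - (i : ℕ)) = σ ^ (m - (j : ℕ)) * σ ^ ((j : ℕ) - (i : ℕ)) := by
        rw [← pow_add]; congr 1; omega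
      have h1 : (σ ^ (m - (j : ℕ))) ((σ ^ ((j : ℕ) - (i : ℕ))) u)
          = (σ ^ (m - (j : ℕ))) u := by
        rw [← Equiv.Perm.mul_apply, ← hsplit]; exact hij
      have h2 : (σ ^ ((j : ℕ) - (i : ℕ))) u = u := (σ ^ (m - (j : ℕ))).injective h1
      have hper2 : Function.IsPeriodicPt σ ((j : ℕ) - (i : ℕ)) u := by
        show σ^[(j : ℕ) - (i : ℕ)] u = u
        rwa [Equiv.Perm.iterate_eq_pow]
      have := hper2.minimalPeriod_le (by omega)
      omega
    intro i j hij
    rcases le_total (i : ℕ) (j : ℕ) with h | h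
    · exact aux i j h hij
    · exact (aux j i h hij.symm).symm
  have h0 : f 0 = u := by
    show (σ ^ (m - 0)) u = u
    rwa [Nat.sub_zero]
  have hl : f (Fin.last k) = v := by
    show (σ ^ (m - k)) u = v
    rw [show m - k = 1 from by omega, pow_one]
    exact hσu
  have hk : k < n := by
    have := Fintype.card_le_of_injective f hfinj
    simp only [Fintype.card_fin] at this
    omega
  have hstep : ∀ i : Fin k, σ (f i.succ) = f i.castSucc := by
    intro i
    show σ ((σ ^ (m - ((i : ℕ) + 1))) u) = (σ ^ (m - (i : ℕ))) u
    rw [show m - (i : ℕ) = (m - ((i : ℕ) + 1)) + 1 from by omega, pow_succ',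
      Equiv.Perm.mul_apply]
  have hstep0 : σ (f 0) = f (Fin.last k) := by rw [h0, hl]; exact hσu
  have hE' : ∀ i : Fin k, E (f i.castSucc) (f i.succ) := by
    intro i
    have h1 := hσ (f i.succ)
    rw [hstep i] at h1
    have hne1 : f i.castSucc ≠ v := by
      rw [← hl]; intro hc
      have := congrArg Fin.val (hfinj hc)
      simp [Fin.coe_castSucc, Fin.val_last] at this
      omega
    have hne2 : f i.succ ≠ u := by
      rw [← h0]; intro hc
      have := congrArg Fin.val (hfinj hc)
      simp [Fin.val_succ] at this
    by_contra hEne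
    exact h1 (by simp [modMat, symbAdj, hne1, hne2, hEne])
  have himg : ∀ j : Fin (k + 1), ∃ j', σ (f j) = f j' := by
    intro j
    refine Fin.cases ?_ ?_ j
    · exact ⟨Fin.last k, hstep0⟩
    · intro i; exact ⟨i.castSucc, hstep i⟩
  have hpre : ∀ j : Fin (k + 1), ∃ j', f j = σ (f j') := by
    intro j
    refine Fin.lastCases ?_ ?_ j
    · exact ⟨0, hstep0.symm⟩
    · intro i; exact ⟨i.succ, (hstep i).symm⟩
  have hp : ∀ w, (∀ j, f j ≠ w) ↔ (∀ j, f j ≠ σ w) := by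
    intro w
    constructor
    · intro hw j hj
      obtain ⟨j', hj'⟩ := hpre j
      rw [hj'] at hj
      exact hw j' (σ.injective hj)
    · intro hw j hj
      obtain ⟨j', hj'⟩ := himg j
      exact hw j' (by rw [← hj', hj])
  set τ : Perm {w : Fin n // ∀ j, f j ≠ w} := σ.subtypePerm (fun w => (hp w).symm) with hτdef
  refine ⟨⟨⟨(⟨k, hk⟩ : Fin n), ⟨f, hfinj, h0, hl, hE'⟩⟩, τ⟩, ?_⟩
  apply Equiv.ext
  intro w
  by_cases hw : ∀ j, f j ≠ w
  · rw [Phi_apply_notmem τ hw]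
    rfl
  · push_neg at hw
    obtain ⟨j, hj⟩ := hw
    rw [← hj]
    refine Fin.cases ?_ ?_ j
    · rw [Phi_apply_zero hfinj]
      exact hstep0.symm
    · intro i
      rw [Phi_apply_succ hfinj]
      exact (hstep i).symm

lemma term_eq {k : ℕ} {f : Fin (k + 1) → Fin n} (hfinj : Function.Injective f)
    (h0 : f 0 = u) (hl : f (Fin.last k) = v)
    (hE : ∀ i : Fin k, E (f i.castSucc) (f i.succ))
    (τ : Perm {w : Fin n // ∀ j, f j ≠ w}) :
    Equiv.Perm.sign (Phi f τ) • ∏ i, modMat n F E v u ((Phi f τ) i) i =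
      (∏ i : Fin k, (-X ((f i.castSucc, f i.succ)) : MvPolynomial (Fin n × Fin n) F)) *
        (Equiv.Perm.sign τ • ∏ b : {w : Fin n // ∀ j, f j ≠ w},
          symbAdj n F E ((τ b) : Fin n) (b : Fin n)) := by
  have hsign : Equiv.Perm.sign (Phi f τ) = (-1 : ℤˣ) ^ k * Equiv.Perm.sign τ := by
    rw [Phi, map_mul, sign_pcyc hfinj, Equiv.Perm.sign_ofSubtype]
  have hprod : ∏ i, modMat n F E v u ((Phi f τ) i) i =
      (∏ b : {w : Fin n // ∀ j, f j ≠ w},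
        symbAdj n F E ((τ b) : Fin n) (b : Fin n)) *
      ∏ i : Fin k, (X ((f i.castSucc, f i.succ)) : MvPolynomial (Fin n × Fin n) F) := by
    rw [← Fintype.prod_subtype_mul_prod_subtype (fun w => ∀ j, f j ≠ w)
      (fun i => modMat n F E v u ((Phi f τ) i) i)]
    congr 1
    · -- off-path part
      apply Finset.prod_congr rfl
      intro b _
      have hb := Phi_apply_notmem τ b.2
      simp only [Subtype.coe_eta] at hb
      rw [hb]
      have hne1 : ((τ b) : Fin n) ≠ v := by
        rw [← hl]; exact ((τ b).2 (Fin.last k)).symm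
      have hne2 : (b : Fin n) ≠ u := by
        rw [← h0]; exact (b.2 0).symm
      simp [modMat, hne1, hne2]
    · -- on-path part
      have hbij : Function.Bijective
          (fun j : Fin (k + 1) =>
            (⟨f j, by push_neg; exact ⟨j, rfl⟩⟩ : {w : Fin n // ¬ ∀ j, f j ≠ w})) := by
        constructor
        · intro i j hij
          exact hfinj (congrArg Subtype.val hij)
        · rintro ⟨w, hw⟩
          push_neg at hw
          obtain ⟨j, hj⟩ := hw
          exact ⟨j, Subtype.ext hj⟩
      rw [← Equiv.prod_comp (Equiv.ofBijective _ hbij)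
        (fun x : {w : Fin n // ¬ ∀ j, f j ≠ w} =>
          modMat n F E v u ((Phi f τ) (x : Fin n)) (x : Fin n))]
      simp only [Equiv.ofBijective_apply]
      rw [Fin.prod_univ_succ]
      have ht0 : modMat n F E v u ((Phi f τ) (f 0)) (f 0) = 1 := by
        rw [Phi_apply_zero hfinj, hl, h0]
        simp [modMat]
      rw [ht0, one_mul]
      apply Finset.prod_congr rfl
      intro i _
      rw [Phi_apply_succ hfinj]
      have hne1 : f i.castSucc ≠ v := by
        rw [← hl]; intro hc
        have := congrArg Fin.val (hfinj hc)
        simp [Fin.coe_castSucc, Fin.val_last] at this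
        omega
      have hne2 : f i.succ ≠ u := by
        rw [← h0]; intro hc
        have := congrArg Fin.val (hfinj hc)
        simp [Fin.val_succ] at this
      simp [modMat, symbAdj, hne1, hne2, hE i]
  have hnegprod : (∏ i : Fin k, (-X ((f i.castSucc, f i.succ)) :
      MvPolynomial (Fin n × Fin n) F)) =
      (-1 : MvPolynomial (Fin n × Fin n) F) ^ k *
        ∏ i : Fin k, (X ((f i.castSucc, f i.succ)) : MvPolynomial (Fin n × Fin n) F) := by
    have hneg : ∀ i : Fin k, (-X ((f i.castSucc, f i.succ)) :
        MvPolynomial (Fin n × Fin n) F) =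
        (-1 : MvPolynomial (Fin n × Fin n) F) * X ((f i.castSucc, f i.succ)) :=
      fun i => by ring
    rw [Finset.prod_congr rfl (fun i _ => hneg i), Finset.prod_mul_distrib,
      Finset.prod_const, Finset.card_univ, Fintype.card_fin]
  rw [hsign, hprod, hnegprod]
  simp only [Units.smul_def, zsmul_eq_mul]
  push_cast
  ring

end Main

/-- `det(Ã^{v,u}(G)) = ∑_{P ∈ 𝒫_{u,v}} μ(P) · det(Ã(G[V ∖ V(P)]))`, where the sum
ranges over all simple `u → v` paths `P`, `μ(P) = ∏ (−x_{edge})` over the edges of `P`,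
and `G[V ∖ V(P)]` is the induced subgraph on the vertices off `P`. -/
theorem det_modMat_eq_sum_paths (n : ℕ) (F : Type) [Field F]
    (E : Fin n → Fin n → Prop) [DecidableRel E] (hloop : ∀ w, E w w)
    (v u : Fin n) :
    (modMat n F E v u).det =
      ∑ P : SPath n E u v,
        (∏ i : Fin ((P.1 : ℕ)), -X ((P.2.1 i.castSucc, P.2.1 i.succ))) *
        ((symbAdj n F E).submatrix
          (fun a : {w : Fin n // ∀ i, P.2.1 i ≠ w} => a.1)
          (fun b : {w : Fin n // ∀ i, P.2.1 i ≠ w} => b.1)).det := by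
  classical
  rw [Matrix.det_apply]
  simp only [Matrix.det_apply, Matrix.submatrix_apply, Finset.mul_sum]
  rw [Finset.sum_sigma']
  rw [Finset.univ_sigma_univ]
  refine (Finset.sum_bij_ne_zero
    (i := fun (a : Σ P : SPath n E u v,
      Equiv.Perm {w : Fin n // ∀ i, P.2.1 i ≠ w}) _ _ => DetPathAux.Phi a.1.2.1 a.2)
    ?_ ?_ ?_ ?_).symm
  · intro a h₁ h₂
    exact Finset.mem_univ _
  · intro a₁ h₁₁ h₁₂ a₂ h₂₁ h₂₂ h
    exact Phi_inj a₁ a₂ h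
  · intro σ _ hσ
    have hprodne : (∏ i, modMat n F E v u (σ i) i) ≠ 0 := by
      intro hzero
      rw [hzero, smul_zero] at hσ
      exact hσ rfl
    have hfac : ∀ i, modMat n F E v u (σ i) i ≠ 0 := by
      intro i hi
      exact hprodne (Finset.prod_eq_zero (Finset.mem_univ i) hi)
    obtain ⟨a, ha⟩ := Phi_surj σ hfac
    obtain ⟨hinj, h0, hl, hE⟩ := a.1.2.2
    refine ⟨a, Finset.mem_univ _, ?_, ha⟩
    rw [← term_eq hinj h0 hl hE a.2, ha]
    exact hσ
  · intro a h₁ h₂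
    obtain ⟨hinj, h0, hl, hE⟩ := a.1.2.2
    exact (term_eq hinj h0 hl hE a.2).symm
end

section
/- For any vertices u, v ∈ V, the rational function Ã(G)^{-1}_{u,v} is identically zero if and only if there is no u→v path in G. Equivalently, Ã(G)^{-1}_{u,v} ≢ 0 iff v is reachable from u. -/
open MvPolynomial

/-- The symbolic adjacency matrix viewed over the field of multivariate rational
functions (the fraction field of the polynomial ring). -/
noncomputable def symbAdjK (n : ℕ) (F : Type) [Field F]
    (E : Fin n → Fin n → Prop) [DecidableRel E] :
    Matrix (Fin n) (Fin n) (FractionRing (MvPolynomial (Fin n × Fin n) F)) :=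
  (symbAdj n F E).map (algebraMap (MvPolynomial (Fin n × Fin n) F)
    (FractionRing (MvPolynomial (Fin n × Fin n) F)))

/-! ### Auxiliary lemmas -/

private lemma chain_drop_middle {α : Type*} {r : α → α → Prop} {a : α} {l₂ : List α} :
    ∀ (l₁ : List α) (c : α), List.Chain r c (l₁ ++ a :: l₂) → List.Chain r a l₂
  | [], _, h => (List.chain_cons.mp h).2
  | x :: t, _, h => chain_drop_middle t x (List.chain_cons.mp h).2

/-- From any chain one can extract a duplicate-free chain with the same endpoints. -/
private lemma exists_nodup_chain {α : Type*} {r : α → α → Prop} {b : α} :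
    ∀ (N : ℕ) (l : List α) (a : α), l.length ≤ N → List.Chain r a l →
      List.getLast (a :: l) (List.cons_ne_nil _ _) = b →
      ∃ l', List.Chain r a l' ∧ List.getLast (a :: l') (List.cons_ne_nil _ _) = b ∧
        (a :: l').Nodup ∧ ∀ x ∈ l', x ∈ l := by
  intro N
  induction N with
  | zero =>
    intro l a hlen _ hlast
    have : l = [] := List.length_eq_zero_iff.mp (Nat.le_zero.mp hlen)
    subst this
    exact ⟨[], List.Chain.nil, hlast, List.nodup_singleton a, by simp⟩
  | succ N ih =>
    intro l a hlen hc hlast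
    by_cases ha : a ∈ l
    · obtain ⟨l₁, l₂, rfl⟩ := List.append_of_mem ha
      have hc₂ : List.Chain r a l₂ := chain_drop_middle l₁ a hc
      have hlen₂ : l₂.length ≤ N := by
        have := hlen
        simp only [List.length_append, List.length_cons] at this
        omega
      have hlast₂ : List.getLast (a :: l₂) (List.cons_ne_nil _ _) = b := by
        rw [← hlast]
        exact (List.getLast_append_of_ne_nil (l := a :: l₁) (l' := a :: l₂) _ (List.cons_ne_nil _ _)).symm
      obtain ⟨l', h1, h2, h3, h4⟩ := ih l₂ a hlen₂ hc₂ hlast₂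
      exact ⟨l', h1, h2, h3, fun x hx => by
        have := h4 x hx
        simp [this]⟩
    · cases l with
      | nil => exact ⟨[], List.Chain.nil, hlast, List.nodup_singleton a, by simp⟩
      | cons c t =>
        obtain ⟨hac, hct⟩ := List.chain_cons.mp hc
        have hlen' : t.length ≤ N := by
          simp only [List.length_cons] at hlen; omega
        have hlast' : List.getLast (c :: t) (List.cons_ne_nil _ _) = b := by
          rw [← hlast, List.getLast_cons_cons]
        obtain ⟨t', h1, h2, h3, h4⟩ := ih t c hlen' hct hlast'
        refine ⟨c :: t', List.chain_cons.mpr ⟨hac, h1⟩, ?_, ?_, ?_⟩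
        · rw [List.getLast_cons_cons]; exact h2
        · refine List.nodup_cons.mpr ⟨?_, h3⟩
          intro hmem
          rcases List.mem_cons.mp hmem with h | h
          · exact ha (h ▸ List.mem_cons_self)
          · exact ha (List.mem_cons_of_mem _ (h4 a h))
        · intro x hx
          rcases List.mem_cons.mp hx with h | h
          · simp [h]
          · exact List.mem_cons_of_mem _ (h4 x h)

/-- Reachability gives a permutation sending `v` to `u` that follows edges away from `v`. -/
private lemma reachable_to_perm {n : ℕ} {E : Fin n → Fin n → Prop} (hloop : ∀ w, E w w)
    {u v : Fin n} (h : Relation.ReflTransGen E u v) :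
    ∃ σ : Equiv.Perm (Fin n), σ v = u ∧ ∀ i, i ≠ v → E i (σ i) := by
  obtain ⟨l0, hc0, hlast0⟩ := List.exists_isChain_cons_of_relationReflTransGen h
  obtain ⟨l, hc, hlast, hnd, -⟩ := exists_nodup_chain l0.length l0 u le_rfl hc0 hlast0
  refine ⟨(u :: l).formPerm, ?_, ?_⟩
  · rw [← hlast]; exact List.formPerm_apply_getLast u l
  · intro i hi
    by_cases hmem : i ∈ (u :: l)
    · obtain ⟨k, hk, rfl⟩ := List.getElem_of_mem hmem
      have hk1 : k + 1 < (u :: l).length := by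
        rcases lt_or_eq_of_le (Nat.succ_le_of_lt hk) with h' | h'
        · exact h'
        · exfalso
          apply hi
          rw [← hlast, List.getLast_eq_getElem]
          have hkk : (u :: l).length - 1 = k := by
            simp only [List.length_cons] at h' ⊢; omega
          simp only [hkk]
      rw [List.formPerm_apply_getElem _ hnd k hk]
      have hmod : (k + 1) % (u :: l).length = k + 1 := Nat.mod_eq_of_lt hk1
      simp only [hmod]
      have hchain : (∀ h : 0 < l.length, E u (l.get ⟨0, h⟩)) ∧
          ∀ (i : ℕ) (h : i < l.length - 1), E (l.get ⟨i, by omega⟩) (l.get ⟨i + 1, by omega⟩) := by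
        have H := (List.isChain_iff_getElem (l := u :: l)).mp hc
        exact ⟨fun h => by simpa using H 0 (by simp; omega),
          fun i h => by
            have := H (i + 1) (by simp; omega)
            simp only [List.getElem_cons_succ, List.get_eq_getElem] at this ⊢; exact this⟩
      rcases Nat.eq_zero_or_pos k with rfl | hkpos
      · have h0 : 0 < l.length := by
          simp only [List.length_cons] at hk1; omega
        have := hchain.1 h0
        simp only [List.get_eq_getElem] at this
        simpa using this
      · obtain ⟨j, rfl⟩ := Nat.exists_eq_succ_of_ne_zero (Nat.pos_iff_ne_zero.mp hkpos)
        have hj : j < l.length - 1 := by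
          simp only [List.length_cons] at hk1; omega
        have := hchain.2 j hj
        simp only [List.get_eq_getElem] at this
        simpa using this
    · rw [List.formPerm_apply_of_notMem hmem]
      exact hloop i

/-- A permutation sending `v` to `u` following edges away from `v` gives reachability. -/
private lemma perm_to_reachable {n : ℕ} {E : Fin n → Fin n → Prop}
    {u v : Fin n} (σ : Equiv.Perm (Fin n)) (hσv : σ v = u)
    (hstep : ∀ i, i ≠ v → E i (σ i)) : Relation.ReflTransGen E u v := by
  have key : ∀ k (x : Fin n), (σ ^ k) x = v → Relation.ReflTransGen E x v := by
    intro k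
    induction k with
    | zero =>
      intro x hx
      simp only [pow_zero, Equiv.Perm.coe_one, id_eq] at hx
      exact hx ▸ Relation.ReflTransGen.refl
    | succ k ih =>
      intro x hx
      by_cases hxv : x = v
      · exact hxv ▸ Relation.ReflTransGen.refl
      · refine Relation.ReflTransGen.head (hstep x hxv) (ih (σ x) ?_)
        rw [← hx, pow_succ]
        rfl
  obtain ⟨k, hk⟩ : ∃ k, (σ ^ k) u = v := by
    refine ⟨orderOf σ - 1, ?_⟩
    have h1 : σ ^ orderOf σ = 1 := pow_orderOf_eq_one σ
    have hpos : 0 < orderOf σ := orderOf_pos σ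
    calc (σ ^ (orderOf σ - 1)) u = (σ ^ (orderOf σ - 1)) (σ v) := by rw [hσv]
      _ = (σ ^ (orderOf σ - 1) * σ) v := rfl
      _ = (σ ^ orderOf σ) v := by rw [← pow_succ, Nat.sub_add_cancel hpos]
      _ = v := by rw [h1]; rfl
  exact key k u hk

private lemma sign_cast_ne_zero {F : Type} [Field F] {n : ℕ} (σ : Equiv.Perm (Fin n)) :
    ((Equiv.Perm.sign σ : ℤ) : F) ≠ 0 := by
  rcases Int.units_eq_one_or (Equiv.Perm.sign σ) with h | h <;> simp [h]

/-- The determinant of the symbolic adjacency matrix is nonzero (given self-loops). -/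
private lemma detA_ne_zero (n : ℕ) (F : Type) [Field F]
    (E : Fin n → Fin n → Prop) [DecidableRel E] (hloop : ∀ w, E w w) :
    (symbAdj n F E).det ≠ 0 := by
  intro h0
  have hmap : (symbAdj n F E).map (MvPolynomial.eval
      (fun p : Fin n × Fin n => if p.1 = p.2 then (1 : F) else 0)) = 1 := by
    ext i j
    simp only [Matrix.map_apply, symbAdj, Matrix.of_apply, Matrix.one_apply]
    by_cases hij : i = j
    · subst hij
      simp [hloop i]
    · by_cases hE : E i j <;> simp [hE, hij]
  have h1 : ((symbAdj n F E).map (MvPolynomial.eval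
      (fun p : Fin n × Fin n => if p.1 = p.2 then (1 : F) else 0))).det = 0 := by
    rw [← RingHom.mapMatrix_apply, ← RingHom.map_det, h0, map_zero]
  rw [hmap, Matrix.det_one] at h1
  exact one_ne_zero h1

/-- Characterization of the nonvanishing of the cofactor determinant. -/
private lemma detB_ne_zero_iff (n : ℕ) (F : Type) [Field F]
    (E : Fin n → Fin n → Prop) [DecidableRel E] (u v : Fin n) :
    ((symbAdj n F E).updateRow v (Pi.single u 1)).det ≠ 0 ↔
      ∃ σ : Equiv.Perm (Fin n), σ v = u ∧ ∀ i, i ≠ v → E i (σ i) := by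
  set B := (symbAdj n F E).updateRow v (Pi.single u 1) with hB
  constructor
  · contrapose!
    intro hno
    rw [← Matrix.det_transpose, Matrix.det_apply']
    refine Finset.sum_eq_zero fun σ _ => ?_
    simp only [Matrix.transpose_apply]
    by_cases hσv : σ v = u
    · obtain ⟨i, hiv, hiE⟩ := hno σ hσv
      have hzero : B i (σ i) = 0 := by
        rw [hB, Matrix.updateRow_ne hiv]
        simp [symbAdj, hiE]
      rw [Finset.prod_eq_zero (Finset.mem_univ i) hzero, mul_zero]
    · have hzero : B v (σ v) = 0 := by
        rw [hB, Matrix.updateRow_self]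
        exact Pi.single_eq_of_ne hσv 1
      rw [Finset.prod_eq_zero (Finset.mem_univ v) hzero, mul_zero]
  · rintro ⟨σ, hσv, hσ⟩ h0
    set g : Fin n × Fin n → F := fun p => if σ p.1 = p.2 then 1 else 0 with hg
    have hmap : B.map (MvPolynomial.eval g) = σ.permMatrix F := by
      ext i j
      simp only [Matrix.map_apply, Equiv.Perm.permMatrix, PEquiv.toMatrix_apply,
        Equiv.toPEquiv_apply, Option.mem_def, Option.some.injEq]
      by_cases hiv : i = v
      · subst hiv
        rw [hB, Matrix.updateRow_self, hσv]
        by_cases hju : j = u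
        · subst hju; simp
        · simp [Pi.single_eq_of_ne hju, Ne.symm hju]
      · rw [hB, Matrix.updateRow_ne hiv]
        simp only [symbAdj, Matrix.of_apply]
        by_cases hj : σ i = j
        · subst hj
          simp [hσ i hiv, hg]
        · by_cases hE : E i j <;> simp [hE, hg, hj]
    have h1 : (B.map (MvPolynomial.eval g)).det = 0 := by
      rw [← RingHom.mapMatrix_apply, ← RingHom.map_det, h0, map_zero]
    rw [hmap, Matrix.det_permutation] at h1
    exact sign_cast_ne_zero σ h1

/-- For a digraph with a self-loop at every vertex, the rational function
`Ã(G)⁻¹_{u,v}` is nonzero iff `v` is reachable from `u` in `G`. -/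
theorem symbAdj_inv_ne_zero_iff_reachable (n : ℕ) (F : Type) [Field F]
    (E : Fin n → Fin n → Prop) [DecidableRel E] (hloop : ∀ w, E w w)
    (u v : Fin n) :
    (symbAdjK n F E)⁻¹ u v ≠ 0 ↔ Relation.ReflTransGen E u v := by
  classical
  set R := MvPolynomial (Fin n × Fin n) F
  set K := FractionRing R
  have hinj : Function.Injective (algebraMap R K) := IsFractionRing.injective R K
  have hdetA : (symbAdj n F E).det ≠ 0 := detA_ne_zero n F E hloop
  have hdetK : (symbAdjK n F E).det ≠ 0 := by
    rw [symbAdjK, ← RingHom.mapMatrix_apply, ← RingHom.map_det]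
    intro h
    exact hdetA (hinj (by rw [h, map_zero]))
  have hupd : (symbAdjK n F E).updateRow v (Pi.single u 1) =
      ((symbAdj n F E).updateRow v (Pi.single u 1)).map (algebraMap R K) := by
    ext i j
    by_cases hiv : i = v
    · subst hiv
      rw [Matrix.updateRow_self, Matrix.map_apply, Matrix.updateRow_self]
      by_cases hju : j = u
      · subst hju; simp
      · simp [Pi.single_eq_of_ne hju]
    · rw [Matrix.updateRow_ne hiv, Matrix.map_apply, Matrix.updateRow_ne hiv]
      rfl
  rw [Matrix.inv_def, Matrix.smul_apply, Matrix.adjugate_apply, smul_eq_mul, hupd,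
    ← RingHom.mapMatrix_apply, ← RingHom.map_det]
  have hinvne : Ring.inverse (symbAdjK n F E).det ≠ 0 := by
    rw [Ring.inverse_eq_inv']
    exact inv_ne_zero hdetK
  rw [mul_ne_zero_iff]
  constructor
  · rintro ⟨-, h2⟩
    have hBne : ((symbAdj n F E).updateRow v (Pi.single u 1)).det ≠ 0 := by
      intro h
      exact h2 (by rw [h, map_zero])
    obtain ⟨σ, h1, h2'⟩ := (detB_ne_zero_iff n F E u v).mp hBne
    exact perm_to_reachable σ h1 h2'
  · intro hreach
    obtain ⟨σ, h1, h2⟩ := reachable_to_perm hloop hreach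
    refine ⟨hinvne, ?_⟩
    have hBne := (detB_ne_zero_iff n F E u v).mpr ⟨σ, h1, h2⟩
    intro h
    exact hBne (hinj (by rw [h, map_zero]))
end

section
/- Let P be a simple r→t path in G passing through an SCC Y with Y ∉ {R, T}, where R is the SCC of r, T is the SCC of t, and F is the set of all edges from R to T. Then P uses no edge of F, and the polynomial det(Ã(G)) · det(Ã^{t,r}(G)) contains the monomial (∏_{i∈V} x_{i,i}) · μ(P) · (∏_{i ∈ V∖V(P)} x_{i,i}), which contains no variable x_{u,v} with uv ∈ F; hence det(Ã(G)) · det(Ã^{t,r}(G)) ≢ −Σ_{uv∈F} x_{u,v} · det(Ã^{u,r}(G)) · det(Ã^{t,v}(G)), since every monomial of the right-hand side contains some variable x_{u,v} with uv ∈ F. -/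
open MvPolynomial

lemma prod_ite_X {n : ℕ} {F : Type} [Field F] (s : Finset (Fin n))
    (g : Fin n → Fin n × Fin n) (q : Fin n → Prop) [DecidablePred q] :
    (∏ i ∈ s, (if q i then (X (g i) : MvPolynomial (Fin n × Fin n) F) else 0)) =
      if ∀ i ∈ s, q i then monomial (∑ i ∈ s, Finsupp.single (g i) 1) 1 else 0 := by
  induction s using Finset.induction with
  | empty => simp
  | @insert a s ha ih =>
    rw [Finset.prod_insert ha, ih]
    by_cases hqa : q a
    · by_cases hall : ∀ i ∈ s, q i
      · rw [if_pos hqa, if_pos hall, if_pos (by simpa [hqa] using hall),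
          Finset.sum_insert ha, X, monomial_mul, one_mul]
      · rw [if_pos hqa, if_neg hall, mul_zero,
          if_neg (fun h => hall fun i hi => h i (Finset.mem_insert_of_mem hi))]
    · rw [if_neg hqa, zero_mul,
        if_neg (fun h => hqa (h a (Finset.mem_insert_self a s)))]

lemma fin_zero_sub_one (ℓ : ℕ) : (0 : Fin (ℓ+1)) - 1 = Fin.last ℓ := by
  simp only [zero_sub, Fin.ext_iff, Fin.coe_neg_one, Fin.val_last]

lemma fin_succ_sub_one {ℓ : ℕ} (m : Fin ℓ) : m.succ - 1 = m.castSucc := by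
  rw [← Fin.coeSucc_eq_succ, ← Fin.coe_eq_castSucc]
  exact add_sub_cancel_right _ 1

lemma coeff_det_mul_det_ne_zero (n : ℕ) (F : Type) [Field F]
    (E : Fin n → Fin n → Prop) [DecidableRel E] (hloop : ∀ w, E w w)
    (r t : Fin n) (ℓ : ℕ) (f : Fin (ℓ+1) → Fin n)
    (inj : Function.Injective f) (hf0 : f 0 = r) (hflast : f (Fin.last ℓ) = t)
    (hedge : ∀ i : Fin ℓ, E (f i.castSucc) (f i.succ)) :
    MvPolynomial.coeff
      ((∑ i : Fin n, Finsupp.single (i, i) 1) +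
       (∑ m : Fin ℓ, Finsupp.single (f m.castSucc, f m.succ) 1) +
       ∑ w ∈ Finset.univ.filter (fun w => ∀ i, f i ≠ w), Finsupp.single (w, w) 1)
      ((symbAdj n F E).det * (modMat n F E t r).det) ≠ 0 := by
  set d : (Fin n × Fin n) →₀ ℕ :=
      (∑ i : Fin n, Finsupp.single (i, i) 1) +
      (∑ m : Fin ℓ, Finsupp.single (f m.castSucc, f m.succ) 1) +
      ∑ w ∈ Finset.univ.filter (fun w => ∀ i, f i ≠ w), Finsupp.single (w, w) 1
    with hd
  set σ2 : Equiv.Perm (Fin n) :=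
      Equiv.Perm.viaEmbedding (Equiv.subRight (1 : Fin (ℓ+1))) ⟨f, inj⟩ with hσ2
  have hσ2f : ∀ j, σ2 (f j) = f (j - 1) := by
    intro j; rw [hσ2]
    exact Equiv.Perm.viaEmbedding_apply _ ⟨f, inj⟩ j
  have hσ2off : ∀ w, (∀ j, f j ≠ w) → σ2 w = w := by
    intro w hw; rw [hσ2]
    exact Equiv.Perm.viaEmbedding_apply_of_notMem _ ⟨f, inj⟩ w
      (by rintro ⟨j, hj⟩; exact hw j hj)
  have hσ2r : σ2 r = t := by
    rw [← hf0, hσ2f, fin_zero_sub_one, hflast]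
  have hσ2succ : ∀ m : Fin ℓ, σ2 (f m.succ) = f m.castSucc := by
    intro m; rw [hσ2f, fin_succ_sub_one]
  -- support of d
  have hed : ∀ p : Fin n × Fin n, d p ≠ 0 →
      p.1 = p.2 ∨ ∃ m : Fin ℓ, p.1 = f m.castSucc ∧ p.2 = f m.succ := by
    intro p hp
    by_contra hcon
    push_neg at hcon
    obtain ⟨h1, h2⟩ := hcon
    apply hp
    have e1 : ∀ i : Fin n, (Finsupp.single ((i : Fin n), i) (1:ℕ)) p = 0 := by
      intro i
      rw [Finsupp.single_apply, if_neg]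
      intro h
      exact h1 (by rw [← h])
    have e2 : ∀ m : Fin ℓ, (Finsupp.single (f m.castSucc, f m.succ) (1:ℕ)) p = 0 := by
      intro m
      rw [Finsupp.single_apply, if_neg]
      intro h
      exact h2 m (by rw [← h]) (by rw [← h])
    rw [hd, Finsupp.add_apply, Finsupp.add_apply, Finsupp.finset_sum_apply,
      Finsupp.finset_sum_apply, Finsupp.finset_sum_apply,
      Finset.sum_eq_zero (fun i _ => e1 i), Finset.sum_eq_zero (fun m _ => e2 m),
      Finset.sum_eq_zero (fun w _ => e1 w)]
    rfl
  -- value of products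
  have hPA : ∀ σ : Equiv.Perm (Fin n),
      (∏ i, (symbAdj n F E) (σ i) i) =
        if ∀ i, E (σ i) i then
          monomial (∑ i, Finsupp.single (σ i, i) 1) (1 : F) else 0 := by
    intro σ
    have h : ∀ i ∈ Finset.univ, (symbAdj n F E) (σ i) i =
        if E (σ i) i then (X (σ i, i) : MvPolynomial (Fin n × Fin n) F) else 0 :=
      fun i _ => rfl
    rw [Finset.prod_congr rfl h,
      prod_ite_X Finset.univ (fun i => (σ i, i)) (fun i => E (σ i) i)]
    simp only [Finset.mem_univ, true_implies]
  have hPB : ∀ σ : Equiv.Perm (Fin n),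
      (∏ i, (modMat n F E t r) (σ i) i) =
        if σ r = t ∧ ∀ i ∈ Finset.univ.erase r, E (σ i) i then
          monomial (∑ i ∈ Finset.univ.erase r, Finsupp.single (σ i, i) 1) (1 : F)
        else 0 := by
    intro σ
    rw [← Finset.mul_prod_erase _ _ (Finset.mem_univ r)]
    by_cases hσr : σ r = t
    · have h1 : modMat n F E t r (σ r) r = 1 := by simp [modMat, hσr]
      have h : ∀ i ∈ Finset.univ.erase r, modMat n F E t r (σ i) i =
          if E (σ i) i then (X (σ i, i) : MvPolynomial (Fin n × Fin n) F) else 0 := by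
        intro i hi
        have hir : i ≠ r := Finset.ne_of_mem_erase hi
        have hit : σ i ≠ t := by
          rw [← hσr]; exact fun h => hir (σ.injective h)
        simp [modMat, hit, hir, symbAdj]
      rw [h1, one_mul, Finset.prod_congr rfl h,
        prod_ite_X (Finset.univ.erase r) (fun i => (σ i, i)) (fun i => E (σ i) i)]
      simp [hσr]
    · have h0 : modMat n F E t r (σ r) r = 0 := by simp [modMat, hσr]
      rw [h0, zero_mul, if_neg (fun h => hσr h.1)]
  -- uniqueness
  have key : ∀ σ σ' : Equiv.Perm (Fin n), σ' r = t →
      (∑ i, Finsupp.single (σ i, i) 1) +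
        (∑ i ∈ Finset.univ.erase r, Finsupp.single (σ' i, i) 1) = d →
      σ = 1 ∧ σ' = σ2 := by
    intro σ σ' hσ'r hsum
    have hA : ∀ i, d (σ i, i) ≠ 0 := by
      intro i
      rw [← hsum, Finsupp.add_apply, Finsupp.finset_sum_apply]
      have hle : (Finsupp.single (σ i, i) (1:ℕ)) (σ i, i) ≤
          ∑ k : Fin n, (Finsupp.single (σ k, k) (1:ℕ)) (σ i, i) :=
        Finset.single_le_sum (f := fun k => (Finsupp.single (σ k, k) (1:ℕ)) (σ i, i))
          (fun k _ => Nat.zero_le _) (Finset.mem_univ i)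
      rw [Finsupp.single_apply, if_pos rfl] at hle
      omega
    have hfix : ∀ i, σ i = i := by
      by_contra hc
      push_neg at hc
      have hopt : ∀ i, σ i ≠ i → ∃ m : Fin ℓ, σ i = f m.castSucc ∧ i = f m.succ := by
        intro i hne
        rcases hed (σ i, i) (hA i) with h | ⟨m, hm1, hm2⟩
        · exact absurd h hne
        · exact ⟨m, hm1, hm2⟩
      obtain ⟨i0, hi0⟩ := hc
      obtain ⟨m0, _, hio⟩ := hopt i0 hi0
      set S : Finset (Fin (ℓ+1)) := Finset.univ.filter (fun j => σ (f j) ≠ f j) with hS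
      have hSne : S.Nonempty := ⟨m0.succ, by
        rw [hS, Finset.mem_filter]
        exact ⟨Finset.mem_univ _, by rw [← hio]; exact hi0⟩⟩
      set j := S.min' hSne with hj
      have hjS : j ∈ S := S.min'_mem hSne
      rw [hS, Finset.mem_filter] at hjS
      obtain ⟨m, hm1, hm2⟩ := hopt (f j) hjS.2
      have hjm : j = m.succ := inj hm2
      have hlt : (m.castSucc : Fin (ℓ+1)) < j := by
        rw [hjm]; exact Fin.castSucc_lt_succ
      have hfixc : σ (f m.castSucc) = f m.castSucc := by
        by_contra hne
        have hmem : m.castSucc ∈ S := by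
          rw [hS, Finset.mem_filter]; exact ⟨Finset.mem_univ _, hne⟩
        exact absurd (S.min'_le _ hmem) (not_le.mpr hlt)
      have heq : f j = f m.castSucc := σ.injective (hm1.trans hfixc.symm)
      have : j = m.castSucc := inj heq
      exact absurd this (by rw [hjm]; exact (Fin.castSucc_lt_succ : m.castSucc < m.succ).ne')
    have hσ1 : σ = 1 := Equiv.ext hfix
    subst hσ1
    simp only [Equiv.Perm.one_apply] at hsum
    -- now analyze σ'
    have hB : ∀ i, i ≠ r →
        (∃ m : Fin ℓ, σ' i = f m.castSucc ∧ i = f m.succ) ∨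
        (σ' i = i ∧ ∀ j, f j ≠ i) := by
      intro i hir
      by_contra hcon
      push_neg at hcon
      obtain ⟨hc1, hc2⟩ := hcon
      have hp := DFunLike.congr_fun hsum (σ' i, i)
      rw [hd] at hp
      simp only [Finsupp.add_apply, Finsupp.finset_sum_apply] at hp
      have e2 : ∀ m : Fin ℓ, (Finsupp.single (f m.castSucc, f m.succ) (1:ℕ)) (σ' i, i) = 0 := by
        intro m
        rw [Finsupp.single_apply, if_neg]
        intro h
        exact hc1 m (congrArg Prod.fst h).symm (congrArg Prod.snd h).symm
      have e3 : ∀ w ∈ Finset.univ.filter (fun w => ∀ j, f j ≠ w),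
          (Finsupp.single ((w : Fin n), w) (1:ℕ)) (σ' i, i) = 0 := by
        intro w hw
        rw [Finset.mem_filter] at hw
        rw [Finsupp.single_apply, if_neg]
        intro h
        have hw1 : w = σ' i := congrArg Prod.fst h
        have hw2 : w = i := congrArg Prod.snd h
        obtain ⟨jj, hjj⟩ := hc2 (hw1.symm.trans hw2)
        exact hw.2 jj (hjj.trans hw2.symm)
      rw [Finset.sum_eq_zero (fun m _ => e2 m), Finset.sum_eq_zero e3] at hp
      have hle : (Finsupp.single (σ' i, i) (1:ℕ)) (σ' i, i) ≤
          ∑ k ∈ Finset.univ.erase r, (Finsupp.single (σ' k, k) (1:ℕ)) (σ' i, i) :=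
        Finset.single_le_sum (f := fun k => (Finsupp.single (σ' k, k) (1:ℕ)) (σ' i, i))
          (fun k _ => Nat.zero_le _)
          (Finset.mem_erase.mpr ⟨hir, Finset.mem_univ i⟩)
      rw [Finsupp.single_apply, if_pos rfl] at hle
      omega
    refine ⟨rfl, Equiv.ext fun i => ?_⟩
    by_cases hir : i = r
    · rw [hir, hσ'r, hσ2r]
    · rcases hB i hir with ⟨m, hm1, hm2⟩ | ⟨hfix', hoff⟩
      · rw [hm1, hm2, hσ2succ]
      · rw [hfix', hσ2off i hoff]
  -- existence
  have hex : (∑ i, Finsupp.single ((1 : Equiv.Perm (Fin n)) i, i) 1) +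
      (∑ i ∈ Finset.univ.erase r, Finsupp.single (σ2 i, i) 1) = d := by
    have cancel : ∀ a x y : (Fin n × Fin n) →₀ ℕ, a + x = a + y → x = y := by
      intro a x y h
      ext p
      have := DFunLike.congr_fun h p
      simp only [Finsupp.add_apply] at this
      omega
    have hQ : Finset.univ.filter (fun w => ¬∀ i, f i ≠ w) = Finset.image f Finset.univ := by
      ext w
      simp [eq_comm]
    have himg : ∑ w ∈ Finset.image f Finset.univ, Finsupp.single (σ2 w, w) (1:ℕ) =
        ∑ j : Fin (ℓ+1), Finsupp.single (σ2 (f j), f j) (1:ℕ) :=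
      Finset.sum_image (fun a _ b _ h => inj h)
    have hpath : ∑ j : Fin (ℓ+1), Finsupp.single (σ2 (f j), f j) (1:ℕ) =
        Finsupp.single (t, r) 1 + ∑ m : Fin ℓ, Finsupp.single (f m.castSucc, f m.succ) 1 := by
      rw [Fin.sum_univ_succ]
      congr 1
      · rw [hf0, hσ2r]
      · exact Finset.sum_congr rfl fun m _ => by rw [hσ2succ]
    have huniv : ∑ i : Fin n, Finsupp.single (σ2 i, i) (1:ℕ) =
        Finsupp.single (t, r) 1 +
        ((∑ m : Fin ℓ, Finsupp.single (f m.castSucc, f m.succ) 1) +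
          ∑ w ∈ Finset.univ.filter (fun w => ∀ i, f i ≠ w), Finsupp.single (w, w) 1) := by
      rw [← Finset.sum_filter_add_sum_filter_not Finset.univ (fun w => ∀ i, f i ≠ w)
        (fun w => Finsupp.single (σ2 w, w) (1:ℕ)), hQ, himg, hpath]
      have hoff : ∑ w ∈ Finset.univ.filter (fun w => ∀ i, f i ≠ w),
          Finsupp.single (σ2 w, w) (1:ℕ) =
          ∑ w ∈ Finset.univ.filter (fun w => ∀ i, f i ≠ w), Finsupp.single (w, w) 1 :=
        Finset.sum_congr rfl fun w hw => by
          rw [hσ2off w (Finset.mem_filter.mp hw).2]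
      rw [hoff]
      abel
    have herase : ∑ i ∈ Finset.univ.erase r, Finsupp.single (σ2 i, i) (1:ℕ) =
        (∑ m : Fin ℓ, Finsupp.single (f m.castSucc, f m.succ) 1) +
          ∑ w ∈ Finset.univ.filter (fun w => ∀ i, f i ≠ w), Finsupp.single (w, w) 1 := by
      apply cancel (Finsupp.single (t, r) 1)
      rw [← huniv, ← Finset.add_sum_erase _ _ (Finset.mem_univ r), hσ2r]
    have hdiag : ∑ i : Fin n, Finsupp.single ((1 : Equiv.Perm (Fin n)) i, i) (1:ℕ) =
        ∑ i : Fin n, Finsupp.single ((i : Fin n), i) (1:ℕ) := by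
      simp only [Equiv.Perm.one_apply]
    rw [hdiag, herase, hd]
    abel
  -- E-conditions for σ2
  have hcond2 : σ2 r = t ∧ ∀ i ∈ Finset.univ.erase r, E (σ2 i) i := by
    refine ⟨hσ2r, fun i hi => ?_⟩
    by_cases hon : ∀ j, f j ≠ i
    · rw [hσ2off i hon]; exact hloop i
    · push_neg at hon
      obtain ⟨j, hj⟩ := hon
      have hj0 : j ≠ 0 := by
        rintro rfl
        exact (Finset.ne_of_mem_erase hi) (by rw [← hj, hf0])
      obtain ⟨m, rfl⟩ : ∃ m : Fin ℓ, j = m.succ :=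
        ⟨j.pred hj0, (Fin.succ_pred j hj0).symm⟩
      rw [← hj, hσ2succ]
      exact hedge m
  -- term-by-term evaluation
  have hterm : ∀ σ σ' : Equiv.Perm (Fin n),
      MvPolynomial.coeff d
        ((Equiv.Perm.sign σ • ∏ i, (symbAdj n F E) (σ i) i) *
         (Equiv.Perm.sign σ' • ∏ i, (modMat n F E t r) (σ' i) i)) =
      if σ = 1 then (if σ' = σ2 then (Equiv.Perm.sign σ2) • (1 : F) else 0) else 0 := by
    intro σ σ'
    rw [smul_mul_smul_comm, MvPolynomial.coeff_smul, hPA σ, hPB σ']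
    by_cases h1 : ∀ i, E (σ i) i
    · by_cases h2 : σ' r = t ∧ ∀ i ∈ Finset.univ.erase r, E (σ' i) i
      · rw [if_pos h1, if_pos h2, monomial_mul, one_mul, MvPolynomial.coeff_monomial]
        by_cases h3 : (∑ i, Finsupp.single (σ i, i) 1) +
            (∑ i ∈ Finset.univ.erase r, Finsupp.single (σ' i, i) 1) = d
        · obtain ⟨e1, e2⟩ := key σ σ' h2.1 h3
          subst e1; subst e2
          rw [if_pos h3, if_pos rfl, if_pos rfl]
          simp
        · rw [if_neg h3, smul_zero]
          have : ¬(σ = 1 ∧ σ' = σ2) := by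
            rintro ⟨rfl, rfl⟩
            exact h3 hex
          by_cases hσ : σ = 1
          · rw [if_pos hσ, if_neg (fun h => this ⟨hσ, h⟩)]
          · rw [if_neg hσ]
      · rw [if_neg h2, mul_zero, MvPolynomial.coeff_zero, smul_zero]
        have : ¬(σ = 1 ∧ σ' = σ2) := by
          rintro ⟨rfl, rfl⟩
          exact h2 hcond2
        by_cases hσ : σ = 1
        · rw [if_pos hσ, if_neg (fun h => this ⟨hσ, h⟩)]
        · rw [if_neg hσ]
    · rw [if_neg h1, zero_mul, MvPolynomial.coeff_zero, smul_zero]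
      have hσ : σ ≠ 1 := by
        rintro rfl
        exact h1 fun i => by simpa using hloop i
      rw [if_neg hσ]
  have step1 : ∀ σ : Equiv.Perm (Fin n),
      (∑ σ' : Equiv.Perm (Fin n),
        if σ = 1 then (if σ' = σ2 then (Equiv.Perm.sign σ2) • (1 : F) else 0) else 0) =
      if σ = 1 then (Equiv.Perm.sign σ2) • (1 : F) else 0 := by
    intro σ
    by_cases h : σ = 1
    · simp only [if_pos h]
      rw [Finset.sum_ite_eq' Finset.univ σ2
        (fun _ => (Equiv.Perm.sign σ2) • (1 : F)), if_pos (Finset.mem_univ _)]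
    · simp [h]
  have hval : MvPolynomial.coeff d ((symbAdj n F E).det * (modMat n F E t r).det) =
      (Equiv.Perm.sign σ2) • (1 : F) := by
    rw [Matrix.det_apply, Matrix.det_apply, Finset.sum_mul_sum]
    rw [MvPolynomial.coeff_sum]
    rw [Finset.sum_congr rfl fun σ _ => MvPolynomial.coeff_sum _ _ _]
    rw [Finset.sum_congr rfl fun σ _ => Finset.sum_congr rfl fun σ' _ => hterm σ σ']
    rw [Finset.sum_congr rfl fun σ _ => step1 σ]
    rw [Finset.sum_ite_eq' Finset.univ (1 : Equiv.Perm (Fin n))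
      (fun _ => (Equiv.Perm.sign σ2) • (1 : F)), if_pos (Finset.mem_univ _)]
  rw [hval]
  rcases Int.units_eq_one_or (Equiv.Perm.sign σ2) with h | h <;>
    rw [h] <;> simp [Units.smul_def]

lemma path_rtg {n : ℕ} {E : Fin n → Fin n → Prop} {ℓ : ℕ} (f : Fin (ℓ+1) → Fin n)
    (hedge : ∀ i : Fin ℓ, E (f i.castSucc) (f i.succ)) :
    ∀ j i : Fin (ℓ+1), i ≤ j → Relation.ReflTransGen E (f i) (f j) := by
  intro j
  induction j using Fin.induction with
  | zero =>
    intro i hi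
    rw [Fin.le_zero_iff.mp hi]
  | succ m ih =>
    intro i hi
    by_cases h : i = m.succ
    · rw [h]
    · have hle : i ≤ m.castSucc := by
        rw [Fin.le_def] at hi ⊢
        rw [Fin.val_succ] at hi
        have hne : i.val ≠ m.succ.val := fun hh => h (Fin.ext hh)
        rw [Fin.val_succ] at hne
        simp only [Fin.coe_castSucc]
        omega
      exact (ih i hle).tail (hedge m)

/-- Let `R, T` be distinct SCCs of `G`, `r ∈ R`, `t ∈ T`, and let `F` be the set of all
edges from `R` to `T`. If `P` is a simple `r → t` path through a vertex `y ∉ R ∪ T`,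
then: `P` uses no edge of `F`; the polynomial `det(Ã(G)) · det(Ã^{t,r}(G))` contains
the monomial `(∏_{i∈V} x_{i,i}) · μ(P) · (∏_{i∉V(P)} x_{i,i})`, whose exponent vector
uses no variable `x_{u,v}` with `uv ∈ F`; every monomial of
`−∑_{uv∈F} x_{u,v} det(Ã^{u,r}(G)) det(Ã^{t,v}(G))` contains some variable `x_{u,v}`
with `uv ∈ F`; hence the two polynomials differ. -/
theorem lhs_ne_rhs_of_path_through_outside (n : ℕ) (F : Type) [Field F]
    (E : Fin n → Fin n → Prop) [DecidableRel E] (hloop : ∀ w, E w w)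
    (R T : Finset (Fin n))
    (hR : (R : Set (Fin n)).Nonempty ∧
      (∀ a ∈ R, ∀ b ∈ R, Relation.ReflTransGen E a b) ∧
      ∀ a ∈ R, ∀ b, Relation.ReflTransGen E a b → Relation.ReflTransGen E b a → b ∈ R)
    (hT : (T : Set (Fin n)).Nonempty ∧
      (∀ a ∈ T, ∀ b ∈ T, Relation.ReflTransGen E a b) ∧
      ∀ a ∈ T, ∀ b, Relation.ReflTransGen E a b → Relation.ReflTransGen E b a → b ∈ T)
    (hRT : R ≠ T)
    (r t : Fin n) (hr : r ∈ R) (ht : t ∈ T)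
    (P : SPath n E r t)
    (y : Fin n) (hyP : ∃ j, P.2.1 j = y) (hyR : y ∉ R) (hyT : y ∉ T) :
    -- the exponent vector of the monomial (∏_{i∈V} x_{i,i}) · μ(P) · (∏_{i∉V(P)} x_{i,i})
    letI d : (Fin n × Fin n) →₀ ℕ :=
      (∑ i : Fin n, Finsupp.single (i, i) 1) +
      (∑ m : Fin ((P.1 : ℕ)), Finsupp.single (P.2.1 m.castSucc, P.2.1 m.succ) 1) +
      ∑ w ∈ Finset.univ.filter (fun w => ∀ i, P.2.1 i ≠ w), Finsupp.single (w, w) 1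
    letI RHS : MvPolynomial (Fin n × Fin n) F :=
      -∑ e : {e : Fin n × Fin n // E e.1 e.2 ∧ e.1 ∈ R ∧ e.2 ∈ T},
        X e.1 * (modMat n F E e.1.1 r).det * (modMat n F E t e.1.2).det
    (∀ m : Fin ((P.1 : ℕ)), ¬(P.2.1 m.castSucc ∈ R ∧ P.2.1 m.succ ∈ T)) ∧
    MvPolynomial.coeff d ((symbAdj n F E).det * (modMat n F E t r).det) ≠ 0 ∧
    (∀ e : Fin n × Fin n, E e.1 e.2 → e.1 ∈ R → e.2 ∈ T → d e = 0) ∧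
    (∀ m ∈ RHS.support, ∃ e : Fin n × Fin n, (E e.1 e.2 ∧ e.1 ∈ R ∧ e.2 ∈ T) ∧ m e ≠ 0) ∧
    (symbAdj n F E).det * (modMat n F E t r).det ≠ RHS := by
  obtain ⟨ℓf, f, inj, hf0, hflast, hedge⟩ := P
  obtain ⟨j0, hj0⟩ := hyP
  dsimp only at hj0 ⊢
  set d : (Fin n × Fin n) →₀ ℕ :=
      (∑ i : Fin n, Finsupp.single (i, i) 1) +
      (∑ m : Fin (ℓf : ℕ), Finsupp.single (f m.castSucc, f m.succ) 1) +
      ∑ w ∈ Finset.univ.filter (fun w => ∀ i, f i ≠ w), Finsupp.single (w, w) 1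
    with hd
  set RHS : MvPolynomial (Fin n × Fin n) F :=
      -∑ e : {e : Fin n × Fin n // E e.1 e.2 ∧ e.1 ∈ R ∧ e.2 ∈ T},
        X e.1 * (modMat n F E e.1.1 r).det * (modMat n F E t e.1.2).det
    with hRHS
  -- disjointness of R and T
  have hdisj : ∀ x, x ∈ R → x ∈ T → False := by
    intro x hxR hxT
    apply hRT
    ext b
    constructor
    · intro hb
      exact hT.2.2 x hxT b (hR.2.1 x hxR b hb) (hR.2.1 b hb x hxR)
    · intro hb
      exact hR.2.2 x hxR b (hT.2.1 x hxT b hb) (hT.2.1 b hb x hxT)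
  have hrtg := path_rtg (E := E) f hedge
  -- conjunct 1
  have c1 : ∀ m : Fin (ℓf : ℕ), ¬(f m.castSucc ∈ R ∧ f m.succ ∈ T) := by
    rintro m ⟨hmR, hmT⟩
    rcases le_or_gt j0 m.castSucc with hle | hlt
    · apply hyR
      have h1 : Relation.ReflTransGen E r y := by
        have := hrtg j0 0 (Fin.zero_le j0)
        rwa [hf0, hj0] at this
      have h2 : Relation.ReflTransGen E y (f m.castSucc) := by
        have := hrtg m.castSucc j0 hle
        rwa [hj0] at this
      have h3 : Relation.ReflTransGen E (f m.castSucc) r := hR.2.1 _ hmR r hr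
      exact hR.2.2 r hr y h1 (h2.trans h3)
    · apply hyT
      have hle2 : m.succ ≤ j0 := hlt
      have h1 : Relation.ReflTransGen E (f m.succ) y := by
        have := hrtg j0 m.succ hle2
        rwa [hj0] at this
      have h2 : Relation.ReflTransGen E y t := by
        have := hrtg (Fin.last (ℓf : ℕ)) j0 (Fin.le_last j0)
        rwa [hj0, hflast] at this
      have h3 : Relation.ReflTransGen E t (f m.succ) := hT.2.1 t ht _ hmT
      exact hT.2.2 t ht y (h3.trans h1) h2
  -- conjunct 2
  have c2 : MvPolynomial.coeff d ((symbAdj n F E).det * (modMat n F E t r).det) ≠ 0 := by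
    rw [hd]
    exact coeff_det_mul_det_ne_zero n F E hloop r t (ℓf : ℕ) f inj hf0 hflast hedge
  -- conjunct 3
  have c3 : ∀ e : Fin n × Fin n, E e.1 e.2 → e.1 ∈ R → e.2 ∈ T → d e = 0 := by
    intro e he h1 h2
    have e1 : ∀ i : Fin n, (Finsupp.single ((i : Fin n), i) (1:ℕ)) e = 0 := by
      intro i
      rw [Finsupp.single_apply, if_neg]
      intro h
      have h12 : e.1 = e.2 := by rw [← h]
      exact hdisj e.1 h1 (h12 ▸ h2)
    have e2 : ∀ m : Fin (ℓf : ℕ), (Finsupp.single (f m.castSucc, f m.succ) (1:ℕ)) e = 0 := by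
      intro m
      rw [Finsupp.single_apply, if_neg]
      intro h
      subst h
      exact c1 m ⟨h1, h2⟩
    rw [hd]
    simp only [Finsupp.add_apply, Finsupp.finset_sum_apply]
    rw [Finset.sum_eq_zero (fun i _ => e1 i), Finset.sum_eq_zero (fun m _ => e2 m),
      Finset.sum_eq_zero (fun w _ => e1 w)]
    rfl
  -- conjunct 4
  have c4 : ∀ m ∈ RHS.support,
      ∃ e : Fin n × Fin n, (E e.1 e.2 ∧ e.1 ∈ R ∧ e.2 ∈ T) ∧ m e ≠ 0 := by
    intro m hm
    rw [hRHS, MvPolynomial.mem_support_iff, MvPolynomial.coeff_neg, neg_ne_zero,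
      MvPolynomial.coeff_sum] at hm
    obtain ⟨e, -, he⟩ := Finset.exists_ne_zero_of_sum_ne_zero hm
    refine ⟨e.1, e.2, ?_⟩
    intro hme
    apply he
    rw [mul_assoc, MvPolynomial.coeff_X_mul' m e.1,
      if_neg (by rw [Finsupp.mem_support_iff]; exact fun h => h hme)]
  -- conjunct 5
  have c5 : (symbAdj n F E).det * (modMat n F E t r).det ≠ RHS := by
    intro heq
    rw [heq] at c2
    obtain ⟨e, hcond, hne⟩ := c4 d (MvPolynomial.mem_support_iff.mpr c2)
    exact hne (c3 e hcond.1 hcond.2.1 hcond.2.2)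
  exact ⟨c1, c2, c3, c4, c5⟩
end

section
/- Let δ_1, ..., δ_ℓ ∈ [0, δ] with Σ_{i=1}^{ℓ} n^{δ_i} ≤ n (each n^{δ_i} ≤ n^δ), and suppose the function q ↦ n^{ω(q,a,q)} satisfies superadditivity in the sense that n^{ω(q_1,a,q_1)} + n^{ω(q_2,a,q_2)} ≤ n^{ω(q,a,q)} whenever n^{q} = n^{q_1} + n^{q_2}. Then Σ_{i=1}^{ℓ} n^{ω(δ_i, a, δ_i)} ≤ 3 · n^{1-δ} · n^{ω(δ, a, δ)}. -/
open Real



theorem list_mul_le_sum (c : ℝ) : ∀ (L : List ℝ), (∀ x ∈ L, c ≤ x) → (L.length : ℝ) * c ≤ L.sum := by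
  intro L
  induction L with
  | nil => simp
  | cons a t ih =>
    intro h
    have h1 := h a (by simp)
    have h2 := ih (fun x hx => h x (by simp [hx]))
    simp only [List.length_cons, List.sum_cons]
    push_cast
    nlinarith
theorem list_sum_le_mul (c : ℝ) : ∀ (L : List ℝ), (∀ x ∈ L, x ≤ c) → L.sum ≤ (L.length : ℝ) * c := by
  intro L
  induction L with
  | nil => simp
  | cons a t ih =>
    intro h
    have h1 := h a (by simp)
    have h2 := ih (fun x hx => h x (by simp [hx]))
    simp only [List.length_cons, List.sum_cons]
    push_cast
    nlinarith

theorem merge_aux (n : ℝ) (hn : 1 < n) (δ M : ℝ) (hδ0 : 0 ≤ δ) (f : ℝ → ℝ)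
    (hfM : ∀ q, 0 ≤ q → q ≤ δ → f q ≤ M) (hM : 0 ≤ M)
    (hsuper : ∀ q₁ q₂ q : ℝ, n ^ q = n ^ q₁ + n ^ q₂ → f q₁ + f q₂ ≤ f q) :
    ∀ (k : ℕ) (L : List ℝ), L.length = k → (∀ q ∈ L, 0 ≤ q ∧ q ≤ δ) →
      (L.map f).sum ≤ (2 * (L.map (fun x => n ^ x)).sum / n ^ δ + 1) * M := by
  intro k
  induction k using Nat.strong_induction_on with
  | _ k IH =>
    intro L hk hmem
    classical
    have hnp : (0:ℝ) < n := by linarith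
    have hδpos : (0:ℝ) < n ^ δ := Real.rpow_pos_of_pos hnp δ
    by_cases h : ∃ p r L', L.Perm (p :: r :: L') ∧ n ^ p + n ^ r ≤ n ^ δ
    · obtain ⟨p, r, L', hperm, hpr⟩ := h
      have hp := hmem p (hperm.mem_iff.mpr (by simp))
      have hr := hmem r (hperm.mem_iff.mpr (by simp))
      have hp1 : (1:ℝ) ≤ n ^ p := Real.one_le_rpow hn.le hp.1
      have hr1 : (1:ℝ) ≤ n ^ r := Real.one_le_rpow hn.le hr.1
      set q := Real.logb n (n ^ p + n ^ r) with hqdef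
      have hq : n ^ q = n ^ p + n ^ r := Real.rpow_logb hnp hn.ne' (by linarith)
      have hq0 : 0 ≤ q := by
        have : n ^ (0:ℝ) ≤ n ^ q := by rw [Real.rpow_zero, hq]; linarith
        exact (Real.rpow_le_rpow_left_iff hn).mp this
      have hqδ : q ≤ δ := by
        have : n ^ q ≤ n ^ δ := by rw [hq]; exact hpr
        exact (Real.rpow_le_rpow_left_iff hn).mp this
      have hlen : L'.length + 1 < k := by
        have := hperm.length_eq
        simp at this
        omega
      have hmem' : ∀ x ∈ (q :: L'), 0 ≤ x ∧ x ≤ δ := by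
        intro x hx
        rcases List.mem_cons.mp hx with rfl | hx
        · exact ⟨hq0, hqδ⟩
        · exact hmem x (hperm.mem_iff.mpr (by simp [hx]))
      have hIH := IH (L'.length + 1) hlen (q :: L') (by simp) hmem'
      have e1 : (L.map f).sum = f p + f r + (L'.map f).sum := by
        have := (hperm.map f).sum_eq
        simpa [add_assoc] using this
      have e2 : (L.map (fun x => n ^ x)).sum
          = n ^ p + n ^ r + (L'.map (fun x => n ^ x)).sum := by
        have := (hperm.map (fun x => n ^ x)).sum_eq
        simpa [add_assoc] using this
      have e3 : ((q :: L').map (fun x => n ^ x)).sum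
          = (L.map (fun x => n ^ x)).sum := by
        simp [e2, hq, add_assoc]
      rw [e1]
      calc f p + f r + (L'.map f).sum ≤ f q + (L'.map f).sum := by
            have := hsuper p r q hq
            linarith
        _ = ((q :: L').map f).sum := by simp
        _ ≤ (2 * ((q :: L').map (fun x => n ^ x)).sum / n ^ δ + 1) * M := hIH
        _ = (2 * (L.map (fun x => n ^ x)).sum / n ^ δ + 1) * M := by rw [e3]
    · push_neg at h
      set P : ℝ → Bool := fun x => decide (n ^ x ≤ n ^ δ / 2) with hP
      have hsmall : (L.filter P).length ≤ 1 := by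
        by_contra hc
        push_neg at hc
        rcases hF : L.filter P with _ | ⟨p, _ | ⟨r, rest⟩⟩
        · rw [hF] at hc; simp at hc
        · rw [hF] at hc; simp at hc
        · have hpmem : p ∈ L.filter P := by rw [hF]; simp
          have hrmem : r ∈ L.filter P := by rw [hF]; simp
          have hpP : n ^ p ≤ n ^ δ / 2 := by
            have := List.of_mem_filter hpmem
            simpa [hP] using this
          have hrP : n ^ r ≤ n ^ δ / 2 := by
            have := List.of_mem_filter hrmem
            simpa [hP] using this
          have hsub : (p :: r :: rest).Sublist L := hF ▸ L.filter_sublist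
          obtain ⟨l, hperm⟩ := hsub.exists_perm_append
          have := h p r (rest ++ l) (by simpa using hperm)
          linarith
      set B := L.filter (fun x => ! P x) with hB
      have hcount : (L.length : ℝ) ≤ 1 + B.length := by
        have := List.length_eq_length_filter_add (l := L) P
        rw [← hB] at this
        have : L.length ≤ 1 + B.length := by omega
        exact_mod_cast this
      have hBsum : (B.length : ℝ) * (n ^ δ / 2) ≤ (L.map (fun x => n ^ x)).sum := by
        have h1 : ((B.map (fun x => n ^ x)).length : ℝ) * (n ^ δ / 2)
            ≤ (B.map (fun x => n ^ x)).sum := by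
          apply list_mul_le_sum
          intro x hx
          obtain ⟨y, hy, rfl⟩ := List.mem_map.mp hx
          have := List.of_mem_filter (hB ▸ hy)
          simp [hP] at this
          linarith
        have h2 : (B.map (fun x => n ^ x)).sum ≤ (L.map (fun x => n ^ x)).sum := by
          apply List.Sublist.sum_le_sum ((L.filter_sublist).map _)
          intro x hx
          obtain ⟨y, hy, rfl⟩ := List.mem_map.mp hx
          positivity
        simpa using h1.trans h2
      have hS : (L.map f).sum ≤ (L.length : ℝ) * M := by
        have := list_sum_le_mul M (L.map f) ?_
        · simpa using this
        · intro x hx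
          obtain ⟨y, hy, rfl⟩ := List.mem_map.mp hx
          exact hfM y (hmem y hy).1 (hmem y hy).2
      have hlenb : (L.length : ℝ) ≤ 2 * (L.map (fun x => n ^ x)).sum / n ^ δ + 1 := by
        have hB2 : (B.length : ℝ) ≤ 2 * (L.map (fun x => n ^ x)).sum / n ^ δ := by
          rw [le_div_iff₀ hδpos]
          nlinarith
        linarith
      calc (L.map f).sum ≤ (L.length : ℝ) * M := hS
        _ ≤ (2 * (L.map (fun x => n ^ x)).sum / n ^ δ + 1) * M :=
            mul_le_mul_of_nonneg_right hlenb hM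

/-- The merging argument: if `δ_1, …, δ_ℓ ∈ [0, δ]` with `∑ n^{δ_i} ≤ n`, the map
`q ↦ n^{ω(q,a,q)}` is superadditive in the sense that merging two sizes never
decreases it, and `ω` is monotone in each argument, then
`∑_i n^{ω(δ_i,a,δ_i)} ≤ 3 · n^{1−δ} · n^{ω(δ,a,δ)}`. -/
theorem merging_bound (n : ℝ) (hn : 1 ≤ n) (a δ : ℝ)
    (ha : a ∈ Set.Icc (0 : ℝ) 1) (hδ : δ ∈ Set.Icc (0 : ℝ) 1)
    (ω : ℝ → ℝ → ℝ → ℝ)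
    (hmono : ∀ x y z x' y' z', x ≤ x' → y ≤ y' → z ≤ z' → ω x y z ≤ ω x' y' z')
    (hsuper : ∀ q₁ q₂ q : ℝ, n ^ q = n ^ q₁ + n ^ q₂ →
      n ^ ω q₁ a q₁ + n ^ ω q₂ a q₂ ≤ n ^ ω q a q)
    (ℓ : ℕ) (δi : Fin ℓ → ℝ)
    (hδi : ∀ i, δi i ∈ Set.Icc (0 : ℝ) δ)
    (hsum : ∑ i, n ^ δi i ≤ n) :
    ∑ i, n ^ ω (δi i) a (δi i) ≤ 3 * n ^ (1 - δ) * n ^ ω δ a δ := by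
  rcases eq_or_lt_of_le hn with h1 | hn1
  · -- n = 1
    subst h1
    simp only [Real.one_rpow] at *
    simp only [Finset.sum_const, Finset.card_univ, Fintype.card_fin, nsmul_eq_mul,
      mul_one] at hsum ⊢
    linarith
  · have hnp : (0:ℝ) < n := by linarith
    have hδ0 : 0 ≤ δ := hδ.1
    have hδpos : (0:ℝ) < n ^ δ := Real.rpow_pos_of_pos hnp δ
    set f : ℝ → ℝ := fun q => n ^ ω q a q with hf
    set M : ℝ := n ^ ω δ a δ with hMdef
    have hM : 0 ≤ M := (Real.rpow_pos_of_pos hnp _).le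
    have hfM : ∀ q, 0 ≤ q → q ≤ δ → f q ≤ M :=
      fun q _ hqδ => Real.rpow_le_rpow_of_exponent_le hn (hmono q a q δ a δ hqδ le_rfl hqδ)
    set L : List ℝ := List.ofFn δi with hL
    have hmem : ∀ q ∈ L, 0 ≤ q ∧ q ≤ δ := by
      intro q hq
      obtain ⟨i, rfl⟩ := List.mem_ofFn.mp hq
      exact ⟨(hδi i).1, (hδi i).2⟩
    have key := merge_aux n hn1 δ M hδ0 f hfM hM hsuper L.length L rfl hmem
    have e1 : (L.map f).sum = ∑ i, n ^ ω (δi i) a (δi i) := by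
      rw [hL, List.map_ofFn, List.sum_ofFn]; rfl
    have e2 : (L.map (fun x => n ^ x)).sum = ∑ i, n ^ δi i := by
      rw [hL, List.map_ofFn, List.sum_ofFn]; rfl
    rw [e1, e2] at key
    have hpow : n ^ (1 - δ) = n / n ^ δ := by
      rw [Real.rpow_sub hnp, Real.rpow_one]
    have hpow1 : (1:ℝ) ≤ n ^ (1 - δ) := Real.one_le_rpow hn (by linarith [hδ.2])
    have hT0 : 0 ≤ ∑ i, n ^ δi i := by positivity
    have hfrac : 2 * (∑ i, n ^ δi i) / n ^ δ + 1 ≤ 3 * n ^ (1 - δ) := by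
      have h2 : 2 * (∑ i, n ^ δi i) / n ^ δ ≤ 2 * n / n ^ δ := by
        gcongr
      have h3 : 2 * n / n ^ δ = 2 * n ^ (1 - δ) := by
        rw [hpow]; ring
      linarith [h2, h3 ▸ h2]
    calc ∑ i, n ^ ω (δi i) a (δi i)
        ≤ (2 * (∑ i, n ^ δi i) / n ^ δ + 1) * M := key
      _ ≤ (3 * n ^ (1 - δ)) * M := mul_le_mul_of_nonneg_right hfrac hM
      _ = 3 * n ^ (1 - δ) * n ^ ω δ a δ := by rw [hMdef]
end
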